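/- Let s be a binary sequence of period N whose support set D_s has size (N-1)/2 and whose complement support is an (N, (N+1)/2, (N+1)/4) cyclic difference set. Let p be an odd prime. If p ∤ (N+1) and p | (N-1), then LC_p(s) = N - 1; if p ∤ (N^2 - 1), then LC_p(s) = N. -/

import Mathlib

open Polynomial

open Finset

namespace Stmt19Aux
variable {L : Type*} [Field L] {N : ℕ} [NeZero N] {β : L}

lemma pow_mod_eq (hβ : β ^ N = 1) (a : ℕ) : β ^ (a % N) = β ^ a := by
  conv_rhs => rw [← Nat.mod_add_div a N, pow_add, pow_mul, hβ, one_pow, mul_one]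

noncomputable def ee (β : L) (i : ZMod N) : L := β ^ i.val

lemma ee_add (hβ : β ^ N = 1) (i j : ZMod N) : ee β (i + j) = ee β i * ee β j := by
  simp only [ee, ZMod.val_add, pow_mod_eq hβ, pow_add]

lemma sum_univ_eq (F : ZMod N → L) : ∑ τ : ZMod N, F τ = ∑ i ∈ Finset.range N, F (i : ZMod N) := by
  refine Finset.sum_nbij' (fun τ => τ.val) (fun i => (i : ZMod N)) ?_ ?_ ?_ ?_ ?_
  · intro τ _; simpa using ZMod.val_lt τ
  · intro i _; simp
  · intro τ _; simp
  · intro i hi; simp [ZMod.val_natCast, Nat.mod_eq_of_lt (Finset.mem_range.1 hi)]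
  · intro τ _; simp

lemma sum_ee_eq_zero (hβ : β ^ N = 1) (hβ1 : β ≠ 1) : ∑ τ : ZMod N, ee β τ = 0 := by
  have h : (β - 1) * ∑ i ∈ Finset.range N, β ^ i = 0 := by
    rw [mul_comm, geom_sum_mul, hβ, sub_self]
  have h2 : ∑ i ∈ Finset.range N, β ^ i = 0 := by
    rcases mul_eq_zero.1 h with h | h
    · exact absurd (sub_eq_zero.1 h) hβ1
    · exact h
  rw [sum_univ_eq (ee β)]
  rw [← h2]
  refine Finset.sum_congr rfl fun i hi => ?_
  simp only [ee]
  rw [ZMod.val_natCast, pow_mod_eq hβ]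

lemma conv (hβ : β ^ N = 1) (D : Finset (ZMod N)) :
    (∑ i ∈ D, ee β i) * (∑ j ∈ D, ee β (-j)) =
      ∑ τ : ZMod N, ((D ∩ D.image (· + τ)).card : L) * ee β τ := by
  rw [Finset.sum_mul_sum]
  have h1 : ∀ i j : ZMod N, ee β i * ee β (-j) = ee β (i - j) := by
    intro i j; rw [← ee_add hβ, sub_eq_add_neg]
  simp only [h1]
  rw [← Finset.sum_product']
  rw [← Finset.sum_fiberwise (D ×ˢ D) (fun x => x.1 - x.2) (fun x => ee β (x.1 - x.2))]
  refine Finset.sum_congr rfl fun τ _ => ?_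
  have h2 : ∀ x ∈ (D ×ˢ D).filter (fun x => x.1 - x.2 = τ), ee β (x.1 - x.2) = ee β τ := by
    intro x hx
    rw [(Finset.mem_filter.1 hx).2]
  rw [Finset.sum_congr rfl h2, Finset.sum_const, nsmul_eq_mul]
  congr 2
  refine Finset.card_bij' (fun x _ => x.1) (fun i _ => (i, i - τ)) ?_ ?_ ?_ ?_
  · rintro ⟨i, j⟩ hx
    simp only [Finset.mem_filter, Finset.mem_product] at hx
    obtain ⟨⟨hi, hj⟩, hij⟩ := hx
    simp only [Finset.mem_inter, Finset.mem_image]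
    exact ⟨hi, j, hj, by rw [← hij]; ring⟩
  · intro i hi
    simp only [Finset.mem_inter, Finset.mem_image] at hi
    obtain ⟨hi1, j, hj, hji⟩ := hi
    simp only [Finset.mem_filter, Finset.mem_product]
    refine ⟨⟨hi1, ?_⟩, by ring⟩
    have : i - τ = j := by rw [← hji]; ring
    rwa [this]
  · rintro ⟨i, j⟩ hx
    simp only [Finset.mem_filter, Finset.mem_product] at hx
    have : i - τ = j := by rw [← hx.2]; ring
    simp [this]
  · intro i _; rfl

lemma key (hN4 : N % 4 = 3) (s : ZMod N → ℤ)
    (hbin : ∀ i, s i = 0 ∨ s i = 1)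
    (hcard' : (Finset.univ.filter fun i : ZMod N => s i = 0).card = (N + 1) / 2)
    (hdiff : ∀ τ : ZMod N, τ ≠ 0 →
      ((Finset.univ.filter fun i : ZMod N => s i = 0) ∩
        ((Finset.univ.filter fun i : ZMod N => s i = 0)).image (· + τ)).card = (N + 1) / 4)
    (hβ : β ^ N = 1) (hβ1 : β ≠ 1) (hchar : (((N + 1) / 4 : ℕ) : L) ≠ 0) :
    ∑ i ∈ Finset.range N, ((s (i : ZMod N) : L)) * β ^ i ≠ 0 := by
  obtain ⟨m, hm⟩ : ∃ m, N = 4 * m + 3 := ⟨N / 4, by omega⟩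
  have hk : (N + 1) / 2 = 2 * m + 2 := by omega
  have hl : (N + 1) / 4 = m + 1 := by omega
  set D := Finset.univ.filter fun i : ZMod N => s i = 0 with hD
  have hee0 : ee β (0 : ZMod N) = 1 := by simp [ee]
  have hsum0 : ∑ τ : ZMod N, ee β τ = 0 := sum_ee_eq_zero hβ hβ1
  -- value of the convolution
  have hQQ : (∑ i ∈ D, ee β i) * (∑ j ∈ D, ee β (-j)) = ((m + 1 : ℕ) : L) := by
    rw [conv hβ D]
    rw [← Finset.add_sum_erase _ _ (Finset.mem_univ (0 : ZMod N))]
    have h0 : D ∩ D.image (· + (0 : ZMod N)) = D := by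
      simp
    have hrest : ∀ τ ∈ Finset.univ.erase (0 : ZMod N),
        ((D ∩ D.image (· + τ)).card : L) * ee β τ = ((m + 1 : ℕ) : L) * ee β τ := by
      intro τ hτ
      rw [hdiff τ (Finset.mem_erase.1 hτ).1, hl]
    rw [Finset.sum_congr rfl hrest, ← Finset.mul_sum, h0, hcard', hk, hee0, mul_one]
    have herase : ∑ τ ∈ Finset.univ.erase (0 : ZMod N), ee β τ = -1 := by
      have := Finset.add_sum_erase Finset.univ (ee β) (Finset.mem_univ (0 : ZMod N))
      rw [hsum0, hee0] at this
      linear_combination this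
    rw [herase]
    push_cast
    ring
  have hQne : (∑ i ∈ D, ee β i) ≠ 0 := by
    intro h
    rw [h, zero_mul] at hQQ
    rw [hl] at hchar
    exact hchar hQQ.symm
  -- rewrite the goal sum over ZMod N
  have hre : ∑ i ∈ Finset.range N, ((s (i : ZMod N) : L)) * β ^ i
      = ∑ τ : ZMod N, (s τ : L) * ee β τ := by
    rw [sum_univ_eq (fun τ => (s τ : L) * ee β τ)]
    refine Finset.sum_congr rfl fun i _ => ?_
    simp only [ee, ZMod.val_natCast, pow_mod_eq hβ]
  have hQ : ∑ i ∈ D, ee β i = ∑ τ : ZMod N, (if s τ = 0 then ee β τ else 0) := by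
    rw [hD, Finset.sum_filter]
  have hPQ : (∑ τ : ZMod N, (s τ : L) * ee β τ) + ∑ i ∈ D, ee β i = 0 := by
    rw [hQ, ← Finset.sum_add_distrib]
    have hpt : ∀ τ ∈ (Finset.univ : Finset (ZMod N)),
        (s τ : L) * ee β τ + (if s τ = 0 then ee β τ else 0) = ee β τ := by
      intro τ _; rcases hbin τ with h | h <;> simp [h]
    rw [Finset.sum_congr rfl hpt, hsum0]
  rw [hre]
  intro h
  rw [h, zero_add] at hPQ
  exact hQne hPQ

end Stmt19Aux

open Stmt19Aux Finset in
theorem stmt19 (N : ℕ) [NeZero N] (hN4 : N % 4 = 3) (s : ZMod N → ℤ)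
    (hbin : ∀ i, s i = 0 ∨ s i = 1)
    (hcard : (Finset.univ.filter fun i : ZMod N => s i = 1).card = (N - 1) / 2)
    (hcard' : (Finset.univ.filter fun i : ZMod N => s i = 0).card = (N + 1) / 2)
    (hdiff : ∀ τ : ZMod N, τ ≠ 0 →
      ((Finset.univ.filter fun i : ZMod N => s i = 0) ∩
        ((Finset.univ.filter fun i : ZMod N => s i = 0)).image (· + τ)).card = (N + 1) / 4)
    (p : ℕ) [Fact p.Prime] (hpodd : p ≠ 2) :
    ((¬ p ∣ (N + 1)) → p ∣ (N - 1) →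
      N - (EuclideanDomain.gcd
        (∑ i ∈ Finset.range N, C ((s (i : ZMod N) : ZMod p)) * X ^ i)
        (1 - X ^ N)).natDegree = N - 1) ∧
    ((¬ p ∣ (N ^ 2 - 1)) →
      N - (EuclideanDomain.gcd
        (∑ i ∈ Finset.range N, C ((s (i : ZMod N) : ZMod p)) * X ^ i)
        (1 - X ^ N)).natDegree = N) := by
  have hN3 : 3 ≤ N := by omega
  set R := ZMod p with hR
  set P : R[X] := ∑ i ∈ Finset.range N, C ((s (i : ZMod N) : ZMod p)) * X ^ i with hP
  have hq0 : (1 - X ^ N : R[X]) ≠ 0 := by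
    intro h
    have h1 : eval 0 (1 - X ^ N : R[X]) = 0 := by rw [h, eval_zero]
    simp [zero_pow (NeZero.ne N)] at h1
  set L := Polynomial.SplittingField (1 - X ^ N : R[X]) with hL
  set φ := algebraMap R L with hφ
  haveI : CharP L p := charP_of_injective_algebraMap φ.injective p
  set g := EuclideanDomain.gcd P (1 - X ^ N : R[X]) with hg
  have hgP : g ∣ P := EuclideanDomain.gcd_dvd_left P _
  have hgq : g ∣ (1 - X ^ N : R[X]) := EuclideanDomain.gcd_dvd_right P _
  have hg0 : g ≠ 0 := by
    intro h
    exact hq0 (EuclideanDomain.gcd_eq_zero_iff.1 h).2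
  -- evaluation of P in L
  have hevalP : ∀ β : L, eval₂ φ β P =
      ∑ i ∈ Finset.range N, ((s (i : ZMod N) : L)) * β ^ i := by
    intro β
    rw [hP, eval₂_finset_sum]
    refine Finset.sum_congr rfl fun i _ => ?_
    rw [eval₂_mul, eval₂_C, eval₂_X_pow, map_intCast]
  -- evaluation of P at 1 over R
  have heval1P : eval 1 P = (((N - 1) / 2 : ℕ) : R) := by
    rw [hP, eval_finset_sum]
    simp only [eval_mul, eval_C, eval_pow, eval_X, one_pow, mul_one]
    have h1 : ∑ i ∈ Finset.range N, ((s (i : ZMod N) : R))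
        = ∑ τ : ZMod N, (s τ : R) :=
      (sum_univ_eq (fun τ => (s τ : R))).symm
    rw [h1]
    have h2 : ∀ τ ∈ (Finset.univ : Finset (ZMod N)),
        (s τ : R) = if s τ = 1 then (1 : R) else 0 := by
      intro τ _; rcases hbin τ with h | h <;> simp [h]
    rw [Finset.sum_congr rfl h2, ← Finset.sum_filter, Finset.sum_const, hcard]
    simp
  -- roots of g in L satisfy β ^ N = 1 and P(β) = 0
  have hroot : ∀ β : L, eval₂ φ β g = 0 → β ^ N = 1 ∧ eval₂ φ β P = 0 := by
    intro β hβ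
    obtain ⟨a, ha⟩ := hgq
    obtain ⟨b, hb⟩ := hgP
    constructor
    · have h1 : eval₂ φ β (1 - X ^ N : R[X]) = 0 :=
        (congrArg (eval₂ φ β) ha).trans (by rw [eval₂_mul, hβ, zero_mul])
      simp only [eval₂_sub, eval₂_one, eval₂_X_pow] at h1
      linear_combination -h1
    · rw [hb, eval₂_mul, hβ, zero_mul]
  -- the key nonvanishing for β ≠ 1
  have hkey : ¬ p ∣ (N + 1) → ∀ β : L, β ^ N = 1 → β ≠ 1 → eval₂ φ β P ≠ 0 := by
    intro hp1 β hβN hβ1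
    rw [hevalP β]
    have hchar : (((N + 1) / 4 : ℕ) : L) ≠ 0 := by
      rw [Ne, CharP.cast_eq_zero_iff L p]
      intro hdvd
      exact hp1 (hdvd.trans ⟨4, by omega⟩)
    exact key hN4 s hbin hcard' hdiff hβN hβ1 hchar
  constructor
  · -- case p ∣ N - 1
    intro hp1 hp2
    have hP1 : eval 1 P = 0 := by
      rw [heval1P]
      have hd : p ∣ (N - 1) / 2 := by
        have h2 : (N - 1) = 2 * ((N - 1) / 2) := by omega
        rcases (Nat.Prime.dvd_mul (Fact.out)).1 (h2 ▸ hp2) with h | h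
        · exact absurd (Nat.le_antisymm (Nat.le_of_dvd (by norm_num) h)
            (Fact.out : p.Prime).two_le) hpodd
        · exact h
      exact (ZMod.natCast_eq_zero_iff _ p).2 hd
    have hX1P : (X - 1 : R[X]) ∣ P := by
      have := (dvd_iff_isRoot (p := P) (a := 1)).2 hP1
      simpa using this
    have hX1q : (X - 1 : R[X]) ∣ (1 - X ^ N : R[X]) := by
      have hq1 : eval 1 (1 - X ^ N : R[X]) = 0 := by simp
      have := (dvd_iff_isRoot (p := (1 - X ^ N : R[X])) (a := 1)).2 hq1
      simpa using this
    have hX1g : (X - 1 : R[X]) ∣ g := EuclideanDomain.dvd_gcd hX1P hX1q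
    obtain ⟨g₁, hgg⟩ := hX1g
    have hx0 : (X - 1 : R[X]) ≠ 0 := by simpa using X_sub_C_ne_zero (1 : R)
    have hg₁0 : g₁ ≠ 0 := by rintro rfl; rw [mul_zero] at hgg; exact hg0 hgg
    have hNR : ((N : ℕ) : R) = 1 := by
      have h0 : ((N - 1 : ℕ) : R) = 0 := (ZMod.natCast_eq_zero_iff _ p).2 hp2
      have hN1 : N = (N - 1) + 1 := by omega
      rw [hN1]
      push_cast
      rw [h0, zero_add]
    have hg₁unit : IsUnit g₁ := by
      by_contra hu
      have hdeg : g₁.degree ≠ 0 := fun h =>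
        hu ((isUnit_iff_degree_eq_zero (p := g₁)).2 h)
      have hsp : Splits (g₁.map φ) :=
        Splits.of_dvd (SplittingField.splits (1 - X ^ N : R[X])) (map_ne_zero hq0)
          (map_dvd φ (dvd_trans (Dvd.intro_left _ hgg.symm) hgq))
      obtain ⟨β, hβ⟩ := hsp.exists_eval_eq_zero (by rwa [degree_map])
      rw [eval_map] at hβ
      have hβg : eval₂ φ β g = 0 := by rw [hgg, eval₂_mul, hβ, mul_zero]
      obtain ⟨hβN, hβP⟩ := hroot β hβg
      by_cases hb1 : β = 1
      · -- then (X-1)^2 ∣ 1 - X^N, contradiction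
        subst hb1
        have h1 : eval 1 g₁ = 0 := by
          have h2 := hβ
          rw [eval₂_at_one] at h2
          exact φ.injective (by rwa [map_zero])
        have hX1g₁ : (X - 1 : R[X]) ∣ g₁ := by
          have := (dvd_iff_isRoot (p := g₁) (a := 1)).2 h1
          simpa using this
        have hsq : (X - 1 : R[X]) * (X - 1) ∣ (1 - X ^ N : R[X]) := by
          calc (X - 1 : R[X]) * (X - 1) ∣ (X - 1) * g₁ :=
                mul_dvd_mul_left _ hX1g₁
            _ = g := hgg.symm
            _ ∣ (1 - X ^ N : R[X]) := hgq
        set T : R[X] := ∑ i ∈ Finset.range N, X ^ i with hT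
        have hgeo := geom_sum_mul (X : R[X]) N
        have hX1T : (X - 1 : R[X]) ∣ T := by
          have h2 : (X - 1 : R[X]) * (X - 1) ∣ T * (X - 1) := by
            have h3 : T * (X - 1) = -(1 - X ^ N : R[X]) := by
              rw [hT]; linear_combination hgeo
            rw [h3]
            exact hsq.neg_right
          exact (mul_dvd_mul_iff_right hx0).1 h2
        have hT1 : eval 1 T = 0 :=
          (dvd_iff_isRoot (p := T) (a := 1)).1 (by simpa using hX1T)
        rw [hT, eval_finset_sum] at hT1
        simp only [eval_pow, eval_X, one_pow, Finset.sum_const, Finset.card_range,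
          nsmul_eq_mul, mul_one] at hT1
        rw [hNR] at hT1
        exact one_ne_zero hT1
      · exact hkey hp1 β hβN hb1 hβP
    have hdegg : g.natDegree = 1 := by
      rw [hgg, natDegree_mul hx0 hg₁0, natDegree_eq_zero_of_isUnit hg₁unit]
      have h5 : (X - 1 : R[X]).natDegree = 1 := by
        simpa using natDegree_X_sub_C (1 : R)
      rw [h5]
    rw [hdegg]
  · -- case p ∤ N² - 1
    intro hp
    have hsq : N ^ 2 - 1 = (N - 1) * (N + 1) := by
      rcases Nat.exists_eq_add_of_le hN3 with ⟨n, rfl⟩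
      have h1 : (3 + n) ^ 2 = n * n + 6 * n + 9 := by ring
      have h2 : (3 + n - 1) * (3 + n + 1) = n * n + 6 * n + 8 := by
        have : 3 + n - 1 = 2 + n := by omega
        rw [this]; ring
      omega
    have hp1 : ¬ p ∣ (N + 1) := fun h => hp (hsq ▸ h.mul_left _)
    have hp2 : ¬ p ∣ (N - 1) := fun h => hp (hsq ▸ h.mul_right _)
    have hgunit : IsUnit g := by
      by_contra hu
      have hdeg : g.degree ≠ 0 := fun h => hu ((isUnit_iff_degree_eq_zero (p := g)).2 h)
      have hsp : Splits (g.map φ) :=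
        Splits.of_dvd (SplittingField.splits (1 - X ^ N : R[X])) (map_ne_zero hq0)
          (map_dvd φ hgq)
      obtain ⟨β, hβ⟩ := hsp.exists_eval_eq_zero (by rwa [degree_map])
      rw [eval_map] at hβ
      obtain ⟨hβN, hβP⟩ := hroot β hβ
      by_cases hb1 : β = 1
      · subst hb1
        rw [eval₂_at_one, heval1P] at hβP
        have hd : p ∣ (N - 1) / 2 :=
          (ZMod.natCast_eq_zero_iff _ p).1
            (φ.injective (by rwa [map_zero]) : (((N - 1) / 2 : ℕ) : R) = 0)
        exact hp2 (hd.trans ⟨2, by omega⟩)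
      · exact hkey hp1 β hβN hb1 hβP
    rw [natDegree_eq_zero_of_isUnit hgunit]
    omega
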